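/- Fix α > 0, an integer k ≥ 1, and β ∈ (0, 2) with α < k − 1/β. Then the function h_k(x) = ∑_{j=0}^{k} (-1)^j (k choose j) (x−j)_+^α belongs to L^β(ℝ), i.e. ∫_ℝ |h_k(x)|^β dx < ∞. -/

import Mathlib

open MeasureTheory

open Finset Set


noncomputable def Fsum (n : ℕ) (a : ℝ) (x : ℝ) : ℝ :=
  ∑ j ∈ Finset.range (n + 1), (-1 : ℝ) ^ j * (n.choose j : ℝ) * (x - j) ^ a

lemma Fsum_succ (n : ℕ) (a : ℝ) (x : ℝ) :
    Fsum (n + 1) a x = Fsum n a x - Fsum n a (x - 1) := by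
  unfold Fsum
  rw [Finset.sum_range_succ' (fun j => (-1 : ℝ) ^ j * ((n+1).choose j : ℝ) * (x - j) ^ a) (n+1)]
  have key : ∀ j : ℕ, (-1 : ℝ) ^ (j+1) * ((n+1).choose (j+1) : ℝ) * (x - (j+1 : ℕ)) ^ a
      = (-1 : ℝ) ^ (j+1) * (n.choose (j+1) : ℝ) * (x - (j+1 : ℕ)) ^ a
        - (-1 : ℝ) ^ j * (n.choose j : ℝ) * (x - 1 - j) ^ a := by
    intro j
    have : ((n+1).choose (j+1) : ℝ) = (n.choose j : ℝ) + (n.choose (j+1) : ℝ) := by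
      rw [Nat.choose_succ_succ]; push_cast; ring
    rw [this]
    have hx : x - ((j:ℝ)+1) = x - 1 - j := by ring
    push_cast
    rw [hx]
    ring
  rw [Finset.sum_congr rfl (fun j _ => key j)]
  rw [Finset.sum_sub_distrib]
  have h1 : (∑ j ∈ Finset.range (n+1), (-1 : ℝ) ^ (j+1) * (n.choose (j+1) : ℝ) * (x - (j+1 : ℕ)) ^ a)
      + (-1 : ℝ) ^ 0 * (n.choose 0 : ℝ) * (x - (0 : ℕ)) ^ a
      = Fsum n a x := by
    unfold Fsum
    rw [← Finset.sum_range_succ' (fun j => (-1 : ℝ) ^ j * (n.choose j : ℝ) * (x - j) ^ a) (n+1)]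
    rw [Finset.sum_range_succ]
    simp [Nat.choose_succ_self]
  have h2 : (∑ j ∈ Finset.range (n+1), (-1 : ℝ) ^ j * (n.choose j : ℝ) * (x - 1 - j) ^ a)
      = Fsum n a (x - 1) := rfl
  have e0 : (-1 : ℝ) ^ 0 * ((n+1).choose 0 : ℝ) * (x - (0 : ℕ)) ^ a
      = (-1 : ℝ) ^ 0 * (n.choose 0 : ℝ) * (x - (0 : ℕ)) ^ a := by norm_num
  unfold Fsum at h1 h2
  linarith [h1, h2, e0]

lemma Fsum_hasDerivAt (n : ℕ) (a : ℝ) (x : ℝ) (hx : (n : ℝ) < x) :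
    HasDerivAt (Fsum n a) (a * Fsum n (a - 1) x) x := by
  have : HasDerivAt (Fsum n a)
      (∑ j ∈ Finset.range (n+1), (-1 : ℝ) ^ j * (n.choose j : ℝ) * (a * (x - j) ^ (a - 1))) x := by
    apply HasDerivAt.fun_sum
    intro j hj
    have hj' : (j : ℝ) ≤ (n : ℝ) := by
      exact_mod_cast Nat.lt_succ_iff.mp (Finset.mem_range.mp hj)
    have hne : x - (j : ℝ) ≠ 0 := by linarith
    have h1 : HasDerivAt (fun y : ℝ => y - (j:ℝ)) 1 x := (hasDerivAt_id x).sub_const _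
    have h2 := (Real.hasDerivAt_rpow_const (p := a) (Or.inl hne)).comp x h1
    simpa [mul_comm, mul_assoc, mul_left_comm] using (h2.const_mul ((-1 : ℝ) ^ j * (n.choose j : ℝ)))
  convert this using 1
  unfold Fsum
  rw [Finset.mul_sum]
  apply Finset.sum_congr rfl
  intro j _
  ring

lemma rpow_base_close {y z e : ℝ} (hy : 1 ≤ y) (hyz : y ≤ z) (hzy : z ≤ y + 1) :
    z ^ e ≤ 2 ^ |e| * y ^ e := by
  have hy0 : (0:ℝ) < y := by linarith
  rcases le_or_gt e 0 with he | he
  · have h1 : z ^ e ≤ y ^ e := Real.rpow_le_rpow_of_nonpos hy0 hyz he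
    have h2 : (1:ℝ) ≤ 2 ^ |e| := Real.one_le_rpow one_le_two (abs_nonneg e)
    nlinarith [Real.rpow_nonneg hy0.le e]
  · have h1 : z ^ e ≤ (2 * y) ^ e := by
      apply Real.rpow_le_rpow (by linarith) (by linarith) he.le
    rw [Real.mul_rpow (by norm_num) hy0.le] at h1
    have h2 : (2:ℝ) ^ e ≤ 2 ^ |e| :=
      Real.rpow_le_rpow_of_exponent_le one_le_two (le_abs_self e)
    have h3 : (0:ℝ) ≤ y ^ e := Real.rpow_nonneg hy0.le e
    nlinarith

lemma Fsum_bound (n : ℕ) : ∀ a : ℝ, ∃ C : ℝ, 0 < C ∧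
    ∀ x : ℝ, (n : ℝ) + 1 ≤ x → |Fsum n a x| ≤ C * (x - n) ^ (a - n) := by
  induction n with
  | zero =>
    intro a
    refine ⟨1, one_pos, fun x hx => ?_⟩
    simp only [Nat.cast_zero, zero_add] at hx
    have hx0 : (0:ℝ) ≤ x := by linarith
    have : Fsum 0 a x = x ^ a := by
      simp [Fsum]
    rw [this, abs_of_nonneg (Real.rpow_nonneg hx0 a)]
    simp
  | succ n ih =>
    intro a
    obtain ⟨C, hC, hbound⟩ := ih (a - 1)
    refine ⟨|a| * C * 2 ^ |a - 1 - n| + 1, by positivity, fun x hx => ?_⟩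
    push_cast at hx
    -- MVT on [x-1, x]
    have hx1 : (n : ℝ) + 1 ≤ x - 1 := by linarith
    have hderiv : ∀ y ∈ Set.Ioo (x - 1) x, HasDerivAt (Fsum n a) (a * Fsum n (a-1) y) y := by
      intro y hy
      exact Fsum_hasDerivAt n a y (by rcases hy with ⟨h1, _⟩; linarith)
    have hcont : ContinuousOn (Fsum n a) (Set.Icc (x - 1) x) := by
      intro y hy
      exact (Fsum_hasDerivAt n a y (by rcases hy with ⟨h1, _⟩; linarith)).continuousAt.continuousWithinAt
    obtain ⟨c, hc, hceq⟩ := exists_hasDerivAt_eq_slope (Fsum n a) (fun y => a * Fsum n (a-1) y)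
      (by linarith : x - 1 < x) hcont hderiv
    have hslope : a * Fsum n (a-1) c = Fsum (n+1) a x := by
      rw [hceq, Fsum_succ]
      field_simp
      ring
    rw [← hslope, abs_mul]
    have hc1 : (n:ℝ) + 1 ≤ c := by rcases hc with ⟨h1, _⟩; linarith
    have hb := hbound c hc1
    have hclose : (c - n) ^ (a - 1 - n) ≤ 2 ^ |a - 1 - n| * (x - (n+1)) ^ (a - 1 - n) := by
      apply rpow_base_close (by linarith) (by rcases hc with ⟨h1, _⟩; linarith)
        (by rcases hc with ⟨_, h2⟩; linarith)
    have hpos : (0:ℝ) ≤ (x - (n+1)) ^ (a - 1 - n) := Real.rpow_nonneg (by linarith) _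
    have key : |Fsum n (a-1) c| ≤ C * (2 ^ |a - 1 - n| * (x - (n+1)) ^ (a - 1 - n)) := by
      calc |Fsum n (a-1) c| ≤ C * (c - n) ^ (a - 1 - n) := hb
        _ ≤ C * (2 ^ |a - 1 - n| * (x - (n+1)) ^ (a - 1 - n)) := by
            exact mul_le_mul_of_nonneg_left hclose hC.le
    have hcast : ((n:ℝ) + 1) = ((n + 1 : ℕ) : ℝ) := by push_cast; ring
    have hexp : a - 1 - n = a - ((n+1 : ℕ) : ℝ) := by push_cast; ring
    calc |a| * |Fsum n (a-1) c|
        ≤ |a| * (C * (2 ^ |a - 1 - n| * (x - (n+1)) ^ (a - 1 - n))) :=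
          mul_le_mul_of_nonneg_left key (abs_nonneg a)
      _ = |a| * C * 2 ^ |a - 1 - n| * (x - (n+1)) ^ (a - 1 - n) := by ring
      _ ≤ (|a| * C * 2 ^ |a - 1 - n| + 1) * (x - ((n+1:ℕ):ℝ)) ^ (a - ((n+1:ℕ):ℝ)) := by
          rw [← hexp]
          push_cast
          nlinarith

/-- For `α > 0`, integer `k ≥ 1` and `β ∈ (0,2)` with `α < k - 1/β`, the function
`h_k(x) = ∑_{j=0}^{k} (-1)^j (k choose j) (x - j)_+^α` belongs to `L^β(ℝ)`,
i.e. `∫_ℝ |h_k(x)|^β dx < ∞`. -/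
theorem stmt_2 (α : ℝ) (hα : 0 < α) (k : ℕ) (hk : 1 ≤ k) (β : ℝ)
    (hβ : β ∈ Set.Ioo (0 : ℝ) 2) (h : α < (k : ℝ) - 1 / β) :
    Integrable (fun x : ℝ =>
      |∑ j ∈ Finset.range (k + 1),
          (-1 : ℝ) ^ j * (k.choose j : ℝ) * (max (x - (j : ℝ)) 0) ^ α| ^ β) := by
  obtain ⟨hβ0, hβ2⟩ := hβ
  set H : ℝ → ℝ := fun x => ∑ j ∈ Finset.range (k + 1),
      (-1 : ℝ) ^ j * (k.choose j : ℝ) * (max (x - (j : ℝ)) 0) ^ α with hH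
  set f : ℝ → ℝ := fun x => |H x| ^ β with hf
  have hHcont : Continuous H := by
    apply continuous_finset_sum
    intro j _
    apply Continuous.mul continuous_const
    rw [continuous_iff_continuousAt]
    intro x
    exact (Real.continuousAt_rpow_const _ _ (Or.inr hα.le)).comp
      ((continuous_id.sub continuous_const).max continuous_const).continuousAt
  have hfcont : Continuous f := by
    rw [continuous_iff_continuousAt]
    intro x
    exact (Real.continuousAt_rpow_const _ _ (Or.inr hβ0.le)).comp
      (continuous_abs.continuousAt.comp hHcont.continuousAt)
  have hfnonneg : ∀ x, 0 ≤ f x := fun x => Real.rpow_nonneg (abs_nonneg _) β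
  rw [← integrableOn_univ]
  have hsplit : (Set.univ : Set ℝ) = (Set.Iic 0 ∪ Set.Icc 0 ((k:ℝ)+1)) ∪ Set.Ioi ((k:ℝ)+1) := by
    ext x
    simp only [Set.mem_univ, Set.mem_union, Set.mem_Iic, Set.mem_Icc, Set.mem_Ioi, true_iff]
    by_cases h1 : x ≤ 0
    · tauto
    · by_cases h2 : x ≤ (k:ℝ)+1
      · left; right; constructor <;> linarith
      · right; linarith
  rw [hsplit]
  apply IntegrableOn.union
  apply IntegrableOn.union
  · -- on Iic 0 : f = 0
    have h0 : Set.EqOn (fun _ : ℝ => (0:ℝ)) f (Set.Iic 0) := by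
      intro x hx
      simp only [Set.mem_Iic] at hx
      have : H x = 0 := by
        apply Finset.sum_eq_zero
        intro j _
        have : max (x - (j:ℝ)) 0 = 0 := by
          apply max_eq_right
          have : (0:ℝ) ≤ (j:ℝ) := Nat.cast_nonneg j
          linarith
        rw [this, Real.zero_rpow hα.ne', mul_zero]
      simp only [hf, this, abs_zero]
      rw [Real.zero_rpow hβ0.ne']
    exact (integrableOn_zero).congr_fun h0 measurableSet_Iic
  · exact hfcont.continuousOn.integrableOn_compact isCompact_Icc
  · -- on Ioi (k+1)
    obtain ⟨C, hC, hb⟩ := Fsum_bound k α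
    set p : ℝ := (α - k) * β with hp
    have hplt : p < -1 := by
      have h1 : α - (k:ℝ) < -(1/β) := by linarith
      have := mul_lt_mul_of_pos_right h1 hβ0
      rw [neg_mul, one_div, inv_mul_cancel₀ hβ0.ne'] at this
      linarith
    have hgint : IntegrableOn (fun x : ℝ => C ^ β * (x - k) ^ p) (Set.Ioi ((k:ℝ)+1)) := by
      have base : IntegrableOn (fun t : ℝ => t ^ p) (Set.Ioi (1:ℝ)) :=
        integrableOn_Ioi_rpow_of_lt hplt one_pos
      have base' : Integrable ((Set.Ioi (1:ℝ)).indicator (fun t => t ^ p)) :=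
        (integrable_indicator_iff measurableSet_Ioi).mpr base
      have hshift := base'.comp_sub_right (k:ℝ)
      have heq : ∀ x : ℝ, (Set.Ioi (1:ℝ)).indicator (fun t => t ^ p) (x - k)
          = (Set.Ioi ((k:ℝ)+1)).indicator (fun x => (x - (k:ℝ)) ^ p) x := by
        intro x
        simp only [Set.indicator_apply, Set.mem_Ioi]
        by_cases hx : (1:ℝ) < x - k
        · rw [if_pos hx, if_pos (by linarith)]
        · rw [if_neg hx, if_neg (by intro hc; exact hx (by linarith))]
      have : Integrable ((Set.Ioi ((k:ℝ)+1)).indicator (fun x => (x - (k:ℝ)) ^ p)) :=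
        hshift.congr (Filter.Eventually.of_forall heq)
      have h2 : IntegrableOn (fun x : ℝ => (x - (k:ℝ)) ^ p) (Set.Ioi ((k:ℝ)+1)) :=
        (integrable_indicator_iff measurableSet_Ioi).mp this
      exact h2.const_mul _
    apply Integrable.mono' hgint (hfcont.aestronglyMeasurable.restrict)
    rw [ae_restrict_iff' measurableSet_Ioi]
    apply Filter.Eventually.of_forall
    intro x hx
    simp only [Set.mem_Ioi] at hx
    have hxk : (k:ℝ) + 1 ≤ x := hx.le
    -- H x = Fsum k α x
    have hHF : H x = Fsum k α x := by
      apply Finset.sum_congr rfl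
      intro j hj
      have hj' : (j:ℝ) ≤ (k:ℝ) := by
        exact_mod_cast Nat.lt_succ_iff.mp (Finset.mem_range.mp hj)
      have : max (x - (j:ℝ)) 0 = x - j := max_eq_left (by linarith)
      rw [this]
    have hbx := hb x hxk
    rw [← hHF] at hbx
    have h1 : f x ≤ (C * (x - k) ^ (α - k)) ^ β :=
      Real.rpow_le_rpow (abs_nonneg _) hbx hβ0.le
    have h2 : (C * (x - k) ^ (α - k)) ^ β = C ^ β * (x - k) ^ p := by
      rw [Real.mul_rpow hC.le (Real.rpow_nonneg (by linarith) _), hp,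
        Real.rpow_mul (by linarith : (0:ℝ) ≤ x - k)]
    rw [Real.norm_eq_abs, abs_of_nonneg (hfnonneg x)]
    rw [h2] at h1
    exact h1
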